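/- Let A_V := {W ∈ ℝ^{3s} : R(W_1, W_2, W_3, W) = 0 for all W_1, W_2, W_3 ∈ ℝ^{3s}} and A_{T,V} := A_V^⊥ = {W ∈ ℝ^{3s} : g(W, W_1) = 0 for all W_1 ∈ A_V}. Then for any normalized basis {Ũ_1, …, Ũ_s, T̃_1, …, T̃_s, Ṽ_1, …, Ṽ_s} of ℝ^{3s}, one has A_V = Span{Ṽ_1, …, Ṽ_s} and A_{T,V} = Span{T̃_1, …, T̃_s, Ṽ_1, …, Ṽ_s}. -/

import Mathlib

open scoped BigOperators

noncomputable section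

/-- Index type for `ℝ^{3s}`: the first block indexes `U_1,…,U_s`, the second block
`T_1,…,T_s`, the third block `V_1,…,V_s`. -/
abbrev Ix (s : ℕ) := Fin s ⊕ Fin s ⊕ Fin s

/-- The vector space `ℝ^{3s}`. -/
abbrev Vc (s : ℕ) := Ix s → ℝ

def uI {s : ℕ} (i : Fin s) : Ix s := Sum.inl i
def tI {s : ℕ} (i : Fin s) : Ix s := Sum.inr (Sum.inl i)
def vI {s : ℕ} (i : Fin s) : Ix s := Sum.inr (Sum.inr i)

/-- The standard basis vector `U_i`. -/
def Uv {s : ℕ} (i : Fin s) : Vc s := Pi.single (uI i) 1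
/-- The standard basis vector `T_i`. -/
def Tv {s : ℕ} (i : Fin s) : Vc s := Pi.single (tI i) 1
/-- The standard basis vector `V_i`. -/
def Vv {s : ℕ} (i : Fin s) : Vc s := Pi.single (vI i) 1

/-- The symmetric bilinear form `g` on `ℝ^{3s}` whose only nonzero values on the
standard basis vectors are `g(U_i,V_i) = g(V_i,U_i) = 1` and `g(T_i,T_i) = -1`. -/
def gM (s : ℕ) (x y : Vc s) : ℝ :=
  ∑ i, (x (uI i) * y (vI i) + x (vI i) * y (uI i) - x (tI i) * y (tI i))

/-- The 4-linear form `R` on `ℝ^{3s}` determined by the `ℤ₂`-symmetries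
`R(x,y,z,w) = R(z,w,x,y) = -R(y,x,z,w)` and whose nonzero values on the standard
basis vectors, up to those symmetries, are `R(U_i,U_j,U_j,T_i) = 1` for `i ≠ j`.
(The eight summands below are precisely the full `ℤ₂`-orbit of the generating
components; the summands cancel in pairs when `i = j`.) -/
def RM (s : ℕ) (x y z w : Vc s) : ℝ :=
  ∑ i, ∑ j,
    (x (uI i) * y (uI j) * z (uI j) * w (tI i)
     - x (uI j) * y (uI i) * z (uI j) * w (tI i)
     - x (uI i) * y (uI j) * z (tI i) * w (uI j)
     + x (uI j) * y (uI i) * z (tI i) * w (uI j)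
     + x (uI j) * y (tI i) * z (uI i) * w (uI j)
     - x (tI i) * y (uI j) * z (uI i) * w (uI j)
     - x (uI j) * y (tI i) * z (uI j) * w (uI i)
     + x (tI i) * y (uI j) * z (uI j) * w (uI i))

/-- `Z_i^+ = U_i + (1/2) V_i`. -/
def Zp {s : ℕ} (i : Fin s) : Vc s := Uv i + (2⁻¹ : ℝ) • Vv i
/-- `Z_i^- = U_i - (1/2) V_i`. -/
def Zm {s : ℕ} (i : Fin s) : Vc s := Uv i - (2⁻¹ : ℝ) • Vv i

/-- The standard basis vector of `ℝ^{3s}` with index `a`. -/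
def stdb {s : ℕ} (a : Ix s) : Vc s := Pi.single a 1

/-- A family `b` indexed by `Ix s` (to be thought of as
`Ũ_1,…,Ũ_s,T̃_1,…,T̃_s,Ṽ_1,…,Ṽ_s`) is *normalized* if it is a basis on which `g` and
`R` take exactly the same values as on the standard basis `U_i, T_i, V_i`; i.e. the
only nonzero values of `g` are `g(Ũ_i,Ṽ_i) = g(Ṽ_i,Ũ_i) = 1`, `g(T̃_i,T̃_i) = -1` and
the only nonzero values of `R`, up to its `ℤ₂`-symmetries, are
`R(Ũ_i,Ũ_j,Ũ_j,T̃_i) = 1` for `i ≠ j`. -/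
def IsNormalizedBasis (s : ℕ) (b : Ix s → Vc s) : Prop :=
  LinearIndependent ℝ b ∧ Submodule.span ℝ (Set.range b) = ⊤ ∧
  (∀ a a' : Ix s, gM s (b a) (b a') = gM s (stdb a) (stdb a')) ∧
  (∀ a₁ a₂ a₃ a₄ : Ix s,
    RM s (b a₁) (b a₂) (b a₃) (b a₄) = RM s (stdb a₁) (stdb a₂) (stdb a₃) (stdb a₄))

/-- `A_V = {W : R(W₁,W₂,W₃,W) = 0 for all W₁,W₂,W₃}`. -/
def AVset (s : ℕ) : Set (Vc s) := {W | ∀ W₁ W₂ W₃ : Vc s, RM s W₁ W₂ W₃ W = 0}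

/-- `A_{T,V} = A_V^⊥ = {W : g(W,W₁) = 0 for all W₁ ∈ A_V}`. -/
def ATVset (s : ℕ) : Set (Vc s) := {W | ∀ W₁ ∈ AVset s, gM s W W₁ = 0}

lemma RM_sum1 {s : ℕ} (c : Ix s → ℝ) (v : Ix s → Vc s) (y z w : Vc s) :
    RM s (∑ a : Ix s, c a • v a) y z w = ∑ a : Ix s, c a * RM s (v a) y z w := by
  simp only [RM, Finset.sum_apply, Pi.smul_apply, smul_eq_mul, Finset.mul_sum]
  conv_rhs => rw [Finset.sum_comm]
  refine Finset.sum_congr rfl fun i _ => ?_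
  conv_rhs => rw [Finset.sum_comm]
  refine Finset.sum_congr rfl fun j _ => ?_
  simp only [Finset.sum_mul, Finset.mul_sum, ← Finset.sum_add_distrib, ← Finset.sum_sub_distrib]
  exact Finset.sum_congr rfl fun a _ => by ring

lemma RM_sum2 {s : ℕ} (c : Ix s → ℝ) (v : Ix s → Vc s) (x z w : Vc s) :
    RM s x (∑ a : Ix s, c a • v a) z w = ∑ a : Ix s, c a * RM s x (v a) z w := by
  simp only [RM, Finset.sum_apply, Pi.smul_apply, smul_eq_mul, Finset.mul_sum]
  conv_rhs => rw [Finset.sum_comm]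
  refine Finset.sum_congr rfl fun i _ => ?_
  conv_rhs => rw [Finset.sum_comm]
  refine Finset.sum_congr rfl fun j _ => ?_
  simp only [Finset.sum_mul, Finset.mul_sum, ← Finset.sum_add_distrib, ← Finset.sum_sub_distrib]
  exact Finset.sum_congr rfl fun a _ => by ring

lemma RM_sum3 {s : ℕ} (c : Ix s → ℝ) (v : Ix s → Vc s) (x y w : Vc s) :
    RM s x y (∑ a : Ix s, c a • v a) w = ∑ a : Ix s, c a * RM s x y (v a) w := by
  simp only [RM, Finset.sum_apply, Pi.smul_apply, smul_eq_mul, Finset.mul_sum]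
  conv_rhs => rw [Finset.sum_comm]
  refine Finset.sum_congr rfl fun i _ => ?_
  conv_rhs => rw [Finset.sum_comm]
  refine Finset.sum_congr rfl fun j _ => ?_
  simp only [Finset.sum_mul, Finset.mul_sum, ← Finset.sum_add_distrib, ← Finset.sum_sub_distrib]
  exact Finset.sum_congr rfl fun a _ => by ring

lemma RM_sum4 {s : ℕ} (c : Ix s → ℝ) (v : Ix s → Vc s) (x y z : Vc s) :
    RM s x y z (∑ a : Ix s, c a • v a) = ∑ a : Ix s, c a * RM s x y z (v a) := by
  simp only [RM, Finset.sum_apply, Pi.smul_apply, smul_eq_mul, Finset.mul_sum]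
  conv_rhs => rw [Finset.sum_comm]
  refine Finset.sum_congr rfl fun i _ => ?_
  conv_rhs => rw [Finset.sum_comm]
  refine Finset.sum_congr rfl fun j _ => ?_
  simp only [Finset.sum_mul, Finset.mul_sum, ← Finset.sum_add_distrib, ← Finset.sum_sub_distrib]
  exact Finset.sum_congr rfl fun a _ => by ring

lemma gM_sum1 {s : ℕ} (c : Ix s → ℝ) (v : Ix s → Vc s) (y : Vc s) :
    gM s (∑ a : Ix s, c a • v a) y = ∑ a : Ix s, c a * gM s (v a) y := by
  simp only [gM, Finset.sum_apply, Pi.smul_apply, smul_eq_mul, Finset.mul_sum]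
  conv_rhs => rw [Finset.sum_comm]
  refine Finset.sum_congr rfl fun i _ => ?_
  simp only [Finset.sum_mul, Finset.mul_sum, ← Finset.sum_add_distrib, ← Finset.sum_sub_distrib]
  exact Finset.sum_congr rfl fun a _ => by ring

lemma gM_sum2 {s : ℕ} (c : Ix s → ℝ) (v : Ix s → Vc s) (x : Vc s) :
    gM s x (∑ a : Ix s, c a • v a) = ∑ a : Ix s, c a * gM s x (v a) := by
  simp only [gM, Finset.sum_apply, Pi.smul_apply, smul_eq_mul, Finset.mul_sum]
  conv_rhs => rw [Finset.sum_comm]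
  refine Finset.sum_congr rfl fun i _ => ?_
  simp only [Finset.sum_mul, Finset.mul_sum, ← Finset.sum_add_distrib, ← Finset.sum_sub_distrib]
  exact Finset.sum_congr rfl fun a _ => by ring

lemma expand_std {s : ℕ} (x : Vc s) : x = ∑ a : Ix s, x a • stdb a := by
  funext k
  simp [stdb, Finset.sum_apply, Pi.single_apply]

lemma RM_quad {s : ℕ} (v : Ix s → Vc s) (x y z w : Vc s) :
    RM s (∑ a : Ix s, x a • v a) (∑ a : Ix s, y a • v a) (∑ a : Ix s, z a • v a)
        (∑ a : Ix s, w a • v a)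
      = ∑ a1 : Ix s, ∑ a2 : Ix s, ∑ a3 : Ix s, ∑ a4 : Ix s,
          x a1 * y a2 * z a3 * w a4 * RM s (v a1) (v a2) (v a3) (v a4) := by
  rw [RM_sum1]
  refine Finset.sum_congr rfl fun a1 _ => ?_
  rw [RM_sum2]; simp only [Finset.mul_sum]
  refine Finset.sum_congr rfl fun a2 _ => ?_
  rw [RM_sum3]; simp only [Finset.mul_sum]
  refine Finset.sum_congr rfl fun a3 _ => ?_
  rw [RM_sum4]; simp only [Finset.mul_sum]
  refine Finset.sum_congr rfl fun a4 _ => ?_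
  ring

lemma gM_quad {s : ℕ} (v : Ix s → Vc s) (x y : Vc s) :
    gM s (∑ a : Ix s, x a • v a) (∑ a : Ix s, y a • v a)
      = ∑ a1 : Ix s, ∑ a2 : Ix s, x a1 * y a2 * gM s (v a1) (v a2) := by
  rw [gM_sum1]
  refine Finset.sum_congr rfl fun a1 _ => ?_
  rw [gM_sum2]; simp only [Finset.mul_sum]
  refine Finset.sum_congr rfl fun a2 _ => ?_
  ring

lemma RM_TUU {s : ℕ} (i j : Fin s) (hij : i ≠ j) (W : Vc s) :
    RM s (Tv i) (Uv j) (Uv j) W = W (uI i) := by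
  simp only [RM, Tv, Uv, uI, tI, Pi.single_apply, mul_ite, ite_mul, mul_one, mul_zero,
    zero_mul, one_mul, reduceCtorEq, if_false, Sum.inl.injEq, Sum.inr.injEq, if_true]
  rw [Finset.sum_eq_single i]
  · simp [hij, Finset.sum_ite_eq', hij.symm]
  · intro x _ hx; simp [hx, hij, hij.symm]
  · simp

lemma RM_UUU {s : ℕ} (i j : Fin s) (hij : i ≠ j) (W : Vc s) :
    RM s (Uv i) (Uv j) (Uv j) W = W (tI i) := by
  simp only [RM, Tv, Uv, uI, tI, Pi.single_apply, mul_ite, ite_mul, mul_one, mul_zero,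
    zero_mul, one_mul, reduceCtorEq, if_false, Sum.inl.injEq, Sum.inr.injEq, if_true]
  rw [Finset.sum_eq_single i]
  · simp [hij, Finset.sum_ite_eq', hij.symm]
  · intro x _ hx; simp [hx, hij, hij.symm]
  · simp

lemma mem_AV_iff {s : ℕ} (hs : 2 ≤ s) (W : Vc s) :
    W ∈ AVset s ↔ (∀ i, W (uI i) = 0) ∧ (∀ i, W (tI i) = 0) := by
  haveI : Nontrivial (Fin s) :=
    ⟨⟨⟨0, by omega⟩, ⟨1, by omega⟩, by simp [Fin.ext_iff]⟩⟩
  constructor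
  · intro h
    refine ⟨fun i => ?_, fun i => ?_⟩
    · obtain ⟨j, hj⟩ := exists_ne i
      rw [← RM_TUU i j (Ne.symm hj) W]
      exact h _ _ _
    · obtain ⟨j, hj⟩ := exists_ne i
      rw [← RM_UUU i j (Ne.symm hj) W]
      exact h _ _ _
  · rintro ⟨h1, h2⟩ W1 W2 W3
    simp [RM, h1, h2]

lemma gM_Vv {s : ℕ} (W : Vc s) (i : Fin s) : gM s W (Vv i) = W (uI i) := by
  simp [gM, Vv, vI, uI, tI, Pi.single_apply, Finset.sum_ite_eq', mul_ite, ite_mul]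

lemma mem_ATV_iff {s : ℕ} (hs : 2 ≤ s) (W : Vc s) :
    W ∈ ATVset s ↔ ∀ i, W (uI i) = 0 := by
  constructor
  · intro h i
    rw [← gM_Vv W i]
    refine h _ ((mem_AV_iff hs (Vv i)).2 ⟨fun k => ?_, fun k => ?_⟩)
    · simp [Vv, vI, uI, Pi.single_apply]
    · simp [Vv, vI, tI, Pi.single_apply]
  · intro h W1 hW1
    obtain ⟨h1, h2⟩ := (mem_AV_iff hs W1).1 hW1
    simp [gM, h, h1, h2]

def KV (s : ℕ) : Submodule ℝ (Vc s) where
  carrier := {W | (∀ i, W (uI i) = 0) ∧ (∀ i, W (tI i) = 0)}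
  add_mem' := by
    rintro a b ⟨ha1, ha2⟩ ⟨hb1, hb2⟩
    exact ⟨fun i => by simp [Pi.add_apply, ha1 i, hb1 i],
      fun i => by simp [Pi.add_apply, ha2 i, hb2 i]⟩
  zero_mem' := ⟨fun i => rfl, fun i => rfl⟩
  smul_mem' := by
    rintro c a ⟨h1, h2⟩
    exact ⟨fun i => by simp [Pi.smul_apply, h1 i], fun i => by simp [Pi.smul_apply, h2 i]⟩

def KTV (s : ℕ) : Submodule ℝ (Vc s) where
  carrier := {W | ∀ i, W (uI i) = 0}
  add_mem' := by
    rintro a b ha hb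
    exact fun i => by simp [Pi.add_apply, ha i, hb i]
  zero_mem' := fun i => rfl
  smul_mem' := by
    rintro c a h
    exact fun i => by simp [Pi.smul_apply, h i]

lemma KV_eq_span (s : ℕ) :
    KV s = Submodule.span ℝ (Set.range (Vv : Fin s → Vc s)) := by
  apply le_antisymm
  · intro W hW
    have hWe : W = ∑ i : Fin s, W (vI i) • Vv i := by
      funext k
      rcases k with i | i | i
      · simp only [Finset.sum_apply, Vv, vI, Pi.single_apply]
        simpa [uI] using hW.1 i
      · simp only [Finset.sum_apply, Vv, vI, Pi.single_apply]
        simpa [tI] using hW.2 i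
      · simp [Finset.sum_apply, Vv, vI, Pi.single_apply, Finset.sum_ite_eq']
    rw [hWe]
    exact Submodule.sum_mem _ fun i _ =>
      Submodule.smul_mem _ _ (Submodule.subset_span ⟨i, rfl⟩)
  · rw [Submodule.span_le]
    rintro _ ⟨i, rfl⟩
    exact ⟨fun k => by simp [Vv, vI, uI, Pi.single_apply],
      fun k => by simp [Vv, vI, tI, Pi.single_apply]⟩

lemma KTV_eq_span (s : ℕ) :
    KTV s = Submodule.span ℝ
      (Set.range (Tv : Fin s → Vc s) ∪ Set.range (Vv : Fin s → Vc s)) := by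
  apply le_antisymm
  · intro W hW
    have hWe : W = ∑ i : Fin s, W (tI i) • Tv i + ∑ i : Fin s, W (vI i) • Vv i := by
      funext k
      rcases k with i | i | i
      · simp only [Finset.sum_apply, Tv, Vv, tI, vI, Pi.single_apply]
        simpa [uI] using hW i
      · simp [Finset.sum_apply, Tv, Vv, tI, vI, Pi.single_apply, Finset.sum_ite_eq']
      · simp [Finset.sum_apply, Tv, Vv, tI, vI, Pi.single_apply, Finset.sum_ite_eq']
    rw [hWe]
    refine Submodule.add_mem _ ?_ ?_
    · exact Submodule.sum_mem _ fun i _ => Submodule.smul_mem _ _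
        (Submodule.subset_span (Or.inl ⟨i, rfl⟩))
    · exact Submodule.sum_mem _ fun i _ => Submodule.smul_mem _ _
        (Submodule.subset_span (Or.inr ⟨i, rfl⟩))
  · rw [Submodule.span_le]
    rintro _ (⟨i, rfl⟩ | ⟨i, rfl⟩)
    · exact fun k => by simp [Tv, tI, uI, Pi.single_apply]
    · exact fun k => by simp [Vv, vI, uI, Pi.single_apply]


/-- for any normalized basis `{Ũ_i, T̃_i, Ṽ_i}` of `ℝ^{3s}` one has
`A_V = Span{Ṽ_1,…,Ṽ_s}` and `A_{T,V} = Span{T̃_1,…,T̃_s,Ṽ_1,…,Ṽ_s}`. -/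
theorem stmt13 (s : ℕ) (hs : 2 ≤ s)
    (b : Ix s → Vc s) (hb : IsNormalizedBasis s b) :
    AVset s = ↑(Submodule.span ℝ (Set.range fun i : Fin s => b (vI i))) ∧
    ATVset s = ↑(Submodule.span ℝ
      (Set.range (fun i : Fin s => b (tI i)) ∪ Set.range (fun i : Fin s => b (vI i)))) := by
  obtain ⟨hli, hsp, hg, hR⟩ := hb
  set B : Module.Basis (Ix s) ℝ (Vc s) := Module.Basis.mk hli (by rw [hsp]) with hB
  set φ : Vc s ≃ₗ[ℝ] Vc s := (Pi.basisFun ℝ (Ix s)).equiv B (Equiv.refl _) with hφdef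
  have hφstd : ∀ a : Ix s, φ (stdb a) = b a := by
    intro a
    have h1 : (Pi.basisFun ℝ (Ix s)) a = stdb a := by
      funext k
      simp [stdb, Pi.basisFun_apply, Pi.single_apply, Pi.single]
    rw [← h1, hφdef, Module.Basis.equiv_apply, Equiv.refl_apply, hB, Module.Basis.mk_apply]
  have hφ : ∀ x : Vc s, φ x = ∑ a : Ix s, x a • b a := by
    intro x
    conv_lhs => rw [expand_std x]
    rw [map_sum]
    simp_rw [map_smul, hφstd]
  have hRφ : ∀ x y z w : Vc s, RM s (φ x) (φ y) (φ z) (φ w) = RM s x y z w := by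
    intro x y z w
    rw [hφ x, hφ y, hφ z, hφ w, RM_quad]
    conv_rhs => rw [expand_std x, expand_std y, expand_std z, expand_std w, RM_quad]
    exact Finset.sum_congr rfl fun a1 _ => Finset.sum_congr rfl fun a2 _ =>
      Finset.sum_congr rfl fun a3 _ => Finset.sum_congr rfl fun a4 _ => by
        rw [hR]
  have hgφ : ∀ x y : Vc s, gM s (φ x) (φ y) = gM s x y := by
    intro x y
    rw [hφ x, hφ y, gM_quad]
    conv_rhs => rw [expand_std x, expand_std y, gM_quad]
    exact Finset.sum_congr rfl fun a1 _ => Finset.sum_congr rfl fun a2 _ => by rw [hg]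
  have hAVinv : ∀ W : Vc s, φ W ∈ AVset s ↔ W ∈ AVset s := by
    intro W
    constructor
    · intro h W1 W2 W3
      rw [← hRφ W1 W2 W3 W]
      exact h _ _ _
    · intro h W1 W2 W3
      calc RM s W1 W2 W3 (φ W)
          = RM s (φ (φ.symm W1)) (φ (φ.symm W2)) (φ (φ.symm W3)) (φ W) := by
            simp
        _ = RM s (φ.symm W1) (φ.symm W2) (φ.symm W3) W := hRφ _ _ _ _
        _ = 0 := h _ _ _
  have hAVim : AVset s = ⇑φ '' AVset s := by
    ext W
    constructor
    · intro h
      exact ⟨φ.symm W, (hAVinv _).1 (by rwa [LinearEquiv.apply_symm_apply]),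
        LinearEquiv.apply_symm_apply _ _⟩
    · rintro ⟨W', hW', rfl⟩
      exact (hAVinv W').2 hW'
  have hATVinv : ∀ W : Vc s, φ W ∈ ATVset s ↔ W ∈ ATVset s := by
    intro W
    constructor
    · intro h W1 hW1
      have := h (φ W1) ((hAVinv W1).2 hW1)
      rwa [hgφ] at this
    · intro h W1 hW1
      have hmem : φ.symm W1 ∈ AVset s :=
        (hAVinv _).1 (by rwa [LinearEquiv.apply_symm_apply])
      calc gM s (φ W) W1 = gM s (φ W) (φ (φ.symm W1)) := by
            rw [LinearEquiv.apply_symm_apply]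
        _ = gM s W (φ.symm W1) := hgφ _ _
        _ = 0 := h _ hmem
  have hATVim : ATVset s = ⇑φ '' ATVset s := by
    ext W
    constructor
    · intro h
      exact ⟨φ.symm W, (hATVinv _).1 (by rwa [LinearEquiv.apply_symm_apply]),
        LinearEquiv.apply_symm_apply _ _⟩
    · rintro ⟨W', hW', rfl⟩
      exact (hATVinv W').2 hW'
  have hAVstd : AVset s = ↑(KV s) := Set.ext fun W => mem_AV_iff hs W
  have hATVstd : ATVset s = ↑(KTV s) := Set.ext fun W => mem_ATV_iff hs W
  have himV : ⇑φ '' Set.range (Vv : Fin s → Vc s)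
      = Set.range (fun i : Fin s => b (vI i)) := by
    rw [← Set.range_comp]
    exact congrArg Set.range (funext fun i => hφstd (vI i))
  have himT : ⇑φ '' Set.range (Tv : Fin s → Vc s)
      = Set.range (fun i : Fin s => b (tI i)) := by
    rw [← Set.range_comp]
    exact congrArg Set.range (funext fun i => hφstd (tI i))
  constructor
  · calc AVset s = ⇑φ '' AVset s := hAVim
      _ = ⇑φ '' ↑(KV s) := by rw [hAVstd]
      _ = ↑((KV s).map (φ : Vc s →ₗ[ℝ] Vc s)) := by
            rw [Submodule.map_coe]; simp
      _ = ↑(Submodule.span ℝ (Set.range fun i : Fin s => b (vI i))) := by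
            rw [KV_eq_span, Submodule.map_span]
            congr 1
            rw [← himV]
            simp
  · calc ATVset s = ⇑φ '' ATVset s := hATVim
      _ = ⇑φ '' ↑(KTV s) := by rw [hATVstd]
      _ = ↑((KTV s).map (φ : Vc s →ₗ[ℝ] Vc s)) := by
            rw [Submodule.map_coe]; simp
      _ = ↑(Submodule.span ℝ
            (Set.range (fun i : Fin s => b (tI i)) ∪ Set.range (fun i : Fin s => b (vI i)))) := by
            rw [KTV_eq_span, Submodule.map_span]
            congr 1
            rw [Set.image_union]
            simp only [LinearEquiv.coe_coe]
            rw [himT, himV]
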